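/- Let $\theta \in (0,1]$, $\delta > 0$, $\kappa > 0$, and $\gamma \in [\delta, \kappa + \delta]$. Suppose $s, \bar{y} \in \mathbb{R}^d$ with $s \neq 0$ satisfy $\|\bar{y}\| \leq \kappa \|s\|$ and $s^\top \bar{y} \leq \kappa \|s\|^2$. Define $\hat{y} = \theta \bar{y} + (1-\theta)\gamma s$ and assume $s^\top \hat{y} \geq 0.25 \gamma \|s\|^2$. Then $\frac{\|\hat{y}\|^2}{s^\top \hat{y}} \leq \frac{4\kappa^2}{\delta} + 4(\kappa + \delta)$. -/
import Mathlib


open scoped RealInnerProductSpace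

set_option maxHeartbeats 800000 in
/-- bound on `‖ŷ‖² / (sᵀŷ)` for the damped vector
`ŷ = θ ȳ + (1-θ) γ s`. -/
theorem damped_ratio_bound (d : ℕ) (θ δ κ γ : ℝ)
    (hθ : θ ∈ Set.Ioc (0 : ℝ) 1) (hδ : 0 < δ) (hκ : 0 < κ)
    (hγ : γ ∈ Set.Icc δ (κ + δ))
    (s ybar : EuclideanSpace ℝ (Fin d)) (hs : s ≠ 0)
    (hy1 : ‖ybar‖ ≤ κ * ‖s‖) (hy2 : ⟪s, ybar⟫ ≤ κ * ‖s‖ ^ 2)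
    (yhat : EuclideanSpace ℝ (Fin d))
    (hyhat : yhat = θ • ybar + ((1 - θ) * γ) • s)
    (hcurv : 0.25 * γ * ‖s‖ ^ 2 ≤ ⟪s, yhat⟫) :
    ‖yhat‖ ^ 2 / ⟪s, yhat⟫ ≤ 4 * κ ^ 2 / δ + 4 * (κ + δ) := by
  obtain ⟨hθ0, hθ1⟩ := hθ
  obtain ⟨hγ1, hγ2⟩ := hγ
  have hγ0 : 0 < γ := lt_of_lt_of_le hδ hγ1
  have hsn : 0 < ‖s‖ := norm_pos_iff.mpr hs
  have hsn2 : 0 < ‖s‖ ^ 2 := by positivity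
  have hIpos : 0 < ⟪s, yhat⟫ := lt_of_lt_of_le (by positivity) hcurv
  -- expansion of the norm squared
  have hexp : ‖yhat‖ ^ 2 = θ ^ 2 * ‖ybar‖ ^ 2
      + 2 * (θ * ((1 - θ) * γ)) * ⟪s, ybar⟫ + ((1 - θ) * γ) ^ 2 * ‖s‖ ^ 2 := by
    rw [hyhat, norm_add_sq_real, norm_smul, norm_smul, real_inner_smul_left,
      real_inner_smul_right, real_inner_comm]
    have h1 : 0 ≤ (1 - θ) * γ := by nlinarith
    rw [Real.norm_eq_abs, Real.norm_eq_abs, abs_of_pos hθ0, abs_of_nonneg h1]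
    ring
  -- bound on ‖ybar‖²
  have hyb : ‖ybar‖ ^ 2 ≤ κ ^ 2 * ‖s‖ ^ 2 := by
    nlinarith [norm_nonneg ybar]
  -- key polynomial bound
  have ht : (0:ℝ) ≤ 1 - θ := by linarith
  have hsc : θ ^ 2 * κ ^ 2 + 2 * (θ * ((1 - θ) * γ)) * κ + ((1 - θ) * γ) ^ 2
      ≤ κ ^ 2 * γ / δ + (κ + δ) * γ := by
    have h1 : κ ^ 2 ≤ κ ^ 2 * γ / δ := by
      rw [le_div_iff₀ hδ]; nlinarith
    nlinarith [mul_nonneg (mul_nonneg (mul_nonneg ht ht) hγ0.le)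
        (sub_nonneg.mpr hγ2),
      mul_nonneg (mul_nonneg (mul_nonneg hθ0.le ht) hδ.le) hγ0.le,
      mul_nonneg (mul_nonneg (sq_nonneg θ) hγ0.le)
        (by positivity : (0:ℝ) ≤ κ + δ),
      mul_nonneg (by nlinarith : (0:ℝ) ≤ 1 - θ ^ 2) (sq_nonneg κ)]
  have hkey : ‖yhat‖ ^ 2 ≤ (κ ^ 2 * γ / δ + (κ + δ) * γ) * ‖s‖ ^ 2 := by
    rw [hexp]
    have hA : θ ^ 2 * ‖ybar‖ ^ 2 ≤ θ ^ 2 * κ ^ 2 * ‖s‖ ^ 2 := by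
      linarith [mul_le_mul_of_nonneg_left hyb (sq_nonneg θ)]
    have hB : 2 * (θ * ((1 - θ) * γ)) * ⟪s, ybar⟫
        ≤ 2 * (θ * ((1 - θ) * γ)) * κ * ‖s‖ ^ 2 := by
      have hc : 0 ≤ 2 * (θ * ((1 - θ) * γ)) := by positivity
      linarith [mul_le_mul_of_nonneg_left hy2 hc]
    linarith [mul_le_mul_of_nonneg_right hsc hsn2.le]
  rw [div_le_iff₀ hIpos]
  calc ‖yhat‖ ^ 2 ≤ (κ ^ 2 * γ / δ + (κ + δ) * γ) * ‖s‖ ^ 2 := hkey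
    _ = (4 * κ ^ 2 / δ + 4 * (κ + δ)) * (0.25 * γ * ‖s‖ ^ 2) := by
        field_simp; ring
    _ ≤ (4 * κ ^ 2 / δ + 4 * (κ + δ)) * ⟪s, yhat⟫ := by
        have : 0 ≤ 4 * κ ^ 2 / δ + 4 * (κ + δ) := by positivity
        exact mul_le_mul_of_nonneg_left hcurv this
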